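/- Let γ : [0,1] → (0,∞) satisfy |γ_s − γ_t| ≤ C₂ |s − t|^{α₂} and let c : [0,1] → (0,∞) satisfy |c_s − c_t| ≤ C |s − t|^{α} for constants C₂, C, α₂, α₁ > 0 with α := min(α₁/2, α₂). Let (k_n) be an intermediate sequence with k_n = o(n^{1−ε}) for some ε > 0, set a_t(x) := γ_t c_t x^{γ_t}, and suppose the functions U_t satisfy: for every κ > 0 there is x_κ such that sup_{t∈[0,1]} |U_t(x) − c_t x^{γ_t}| ≤ x^{−κ} for all x ≥ x_κ. If δ_n = o(min(k_n^{−1/(2α₂)} (log n)^{−1/α₂}, k_n^{−1/α₁})), then with λ_n := k_n^{−1/2}: sup_{|s−t|≤δ_n} |γ_s − γ_t| = o(λ_n), sup_{|s−t|≤δ_n} |a_s(n/k_n)/a_t(n/k_n) − 1| = o(λ_n), and sup_{|s−t|≤δ_n} |(U_s(n/k_n) − U_t(n/k_n))/a_t(n/k_n)| = o(λ_n). -/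

import Mathlib

open Filter Topology Set

lemma holderCont {f : ℝ → ℝ} {K β : ℝ} (hβ : 0 < β) (hK : 0 < K)
    (h : ∀ s ∈ Icc (0:ℝ) 1, ∀ u ∈ Icc (0:ℝ) 1, |f s - f u| ≤ K * |s - u| ^ β) :
    ContinuousOn f (Icc 0 1) := by
  intro s hs
  rw [Metric.continuousWithinAt_iff]
  intro e he
  refine ⟨(e / (2 * K)) ^ β⁻¹, by positivity, fun u hu hd => ?_⟩
  rw [Real.dist_eq] at hd ⊢
  calc |f u - f s| ≤ K * |u - s| ^ β := h u hu s hs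
    _ ≤ K * ((e / (2 * K)) ^ β⁻¹) ^ β := by
        exact mul_le_mul_of_nonneg_left
          (Real.rpow_le_rpow (abs_nonneg _) hd.le hβ.le) hK.le
    _ = e / 2 := by
        rw [Real.rpow_inv_rpow (by positivity) hβ.ne']
        field_simp
    _ < e := by linarith

lemma posMin {f : ℝ → ℝ} (hc : ContinuousOn f (Icc (0:ℝ) 1))
    (hpos : ∀ s ∈ Icc (0:ℝ) 1, 0 < f s) :
    ∃ m > 0, ∀ u ∈ Icc (0:ℝ) 1, m ≤ f u := by
  obtain ⟨x, hx, hmin⟩ := isCompact_Icc.exists_isMinOn (nonempty_Icc.2 zero_le_one) hc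
  exact ⟨f x, hpos x hx, fun u hu => hmin hu⟩

lemma upperBd {f : ℝ → ℝ} {K β : ℝ} (hβ : 0 < β) (hK : 0 < K)
    (h : ∀ s ∈ Icc (0:ℝ) 1, ∀ u ∈ Icc (0:ℝ) 1, |f s - f u| ≤ K * |s - u| ^ β) :
    ∀ u ∈ Icc (0:ℝ) 1, f u ≤ f 0 + K := by
  intro u hu
  have h1 := h u hu 0 (left_mem_Icc.2 zero_le_one)
  have h2 : |u - 0| ^ β ≤ 1 := by
    apply Real.rpow_le_one (abs_nonneg _) _ hβ.le
    rw [sub_zero, abs_of_nonneg hu.1]; exact hu.2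
  have := abs_le.1 h1
  nlinarith

set_option maxHeartbeats 1000000 in
/-- Example 2: under Hölder continuity of γ and c, the quantile
expansion U_t(x) ≈ c_t x^{γ_t}, and the mesh condition
δₙ = o(min(kₙ^{-1/(2α₂)} (log n)^{-1/α₂}, kₙ^{-1/α₁})), the smoothness conditions of
Theorem 1 hold with λₙ = kₙ^{-1/2}. -/
theorem holder_model_smoothness
    (γ c : ℝ → ℝ)
    (C₂ C α₁ α₂ : ℝ) (hC₂ : 0 < C₂) (hC : 0 < C) (hα₁ : 0 < α₁) (hα₂ : 0 < α₂)
    (hγpos : ∀ s ∈ Icc (0:ℝ) 1, 0 < γ s) (hcpos : ∀ s ∈ Icc (0:ℝ) 1, 0 < c s)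
    -- Hölder conditions, with α = min(α₁/2, α₂)
    (hγhold : ∀ s ∈ Icc (0:ℝ) 1, ∀ u ∈ Icc (0:ℝ) 1, |γ s - γ u| ≤ C₂ * |s - u| ^ α₂)
    (hchold : ∀ s ∈ Icc (0:ℝ) 1, ∀ u ∈ Icc (0:ℝ) 1,
      |c s - c u| ≤ C * |s - u| ^ min (α₁ / 2) α₂)
    -- intermediate sequence with kₙ = o(n^{1-ε})
    (k : ℕ → ℕ) (hk : ∀ n, 1 ≤ n → 1 ≤ k n ∧ k n ≤ n)
    (hkinfty : Tendsto (fun n : ℕ => (k n : ℝ)) atTop atTop)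
    (hkn0 : Tendsto (fun n : ℕ => (k n : ℝ) / n) atTop (𝓝 0))
    (ε : ℝ) (hε : 0 < ε)
    (hksmall : Tendsto (fun n : ℕ => (k n : ℝ) / (n : ℝ) ^ (1 - ε)) atTop (𝓝 0))
    -- quantile expansion: for every κ > 0, U_t(x) = c_t x^{γ_t} + O(x^{-κ}) uniformly
    (U : ℝ → ℝ → ℝ)
    (hU : ∀ κ : ℝ, 0 < κ → ∃ x₀ : ℝ, ∀ x ≥ x₀,
      ∀ s ∈ Icc (0:ℝ) 1, |U s x - c s * x ^ γ s| ≤ x ^ (-κ))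
    -- the mesh condition on δₙ
    (δ : ℕ → ℝ) (hδpos : ∀ n, 0 < δ n) (hδ0 : Tendsto δ atTop (𝓝 0))
    (hδsmall : Tendsto (fun n : ℕ => δ n /
      min ((k n : ℝ) ^ (-(1 / (2 * α₂))) * (Real.log n) ^ (-(1 / α₂)))
          ((k n : ℝ) ^ (-(1 / α₁)))) atTop (𝓝 0))
    -- λₙ = kₙ^{-1/2} and the scale function a_t(x) = γ_t c_t x^{γ_t}
    (lam : ℕ → ℝ) (hlam : ∀ n, lam n = (k n : ℝ) ^ (-(1/2 : ℝ)))
    (a : ℝ → ℝ → ℝ) (ha : ∀ s x, a s x = γ s * c s * x ^ γ s) :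
    -- (2.11): sup_{|s-u|≤δₙ} |γ_s - γ_u| = o(λₙ)
    (∀ η > 0, ∀ᶠ n : ℕ in atTop, ∀ s ∈ Icc (0:ℝ) 1, ∀ u ∈ Icc (0:ℝ) 1,
      |s - u| ≤ δ n → |γ s - γ u| ≤ η * lam n) ∧
    -- (2.12): sup_{|s-u|≤δₙ} |a_s(n/kₙ)/a_u(n/kₙ) - 1| = o(λₙ)
    (∀ η > 0, ∀ᶠ n : ℕ in atTop, ∀ s ∈ Icc (0:ℝ) 1, ∀ u ∈ Icc (0:ℝ) 1,
      |s - u| ≤ δ n →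
        |a s ((n : ℝ) / (k n : ℝ)) / a u ((n : ℝ) / (k n : ℝ)) - 1| ≤ η * lam n) ∧
    -- (2.13): sup_{|s-u|≤δₙ} |(U_s(n/kₙ) - U_u(n/kₙ))/a_u(n/kₙ)| = o(λₙ)
    (∀ η > 0, ∀ᶠ n : ℕ in atTop, ∀ s ∈ Icc (0:ℝ) 1, ∀ u ∈ Icc (0:ℝ) 1,
      |s - u| ≤ δ n →
        |(U s ((n : ℝ) / (k n : ℝ)) - U u ((n : ℝ) / (k n : ℝ)))
          / a u ((n : ℝ) / (k n : ℝ))| ≤ η * lam n) := by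
  have hα : 0 < min (α₁ / 2) α₂ := lt_min (by positivity) hα₂
  obtain ⟨mγ, hmγ0, hmγ⟩ := posMin (holderCont hα₂ hC₂ hγhold) hγpos
  obtain ⟨mc, hmc0, hmc⟩ := posMin (holderCont hα hC hchold) hcpos
  have hMcB : ∀ u ∈ Icc (0:ℝ) 1, c u ≤ c 0 + C := upperBd hα hC hchold
  set Mc := c 0 + C with hMc_def
  have hMc0 : 0 < Mc := by
    have := hcpos 0 (left_mem_Icc.2 zero_le_one)
    rw [hMc_def]; linarith
  set K₁ := 3 * Mc / (mγ * mc) + 3 / mc + 2 with hK₁def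
  set K₂ := (3 / mc + 2) / mγ + 2 / (mγ * mc) with hK₂def
  set K := max 1 (max K₁ K₂) with hKdef
  have hK1 : (1:ℝ) ≤ K := le_max_left _ _
  have hK0 : (0:ℝ) < K := lt_of_lt_of_le one_pos hK1
  have hKK₁ : K₁ ≤ K := le_trans (le_max_left _ _) (le_max_right _ _)
  have hKK₂ : K₂ ≤ K := le_trans (le_max_right _ _) (le_max_right _ _)
  set κ := 1 / (2 * ε) with hκdef
  have hκ : 0 < κ := by rw [hκdef]; positivity
  obtain ⟨x₀, hx₀⟩ := hU κ hκ
  set X := fun n : ℕ => (n : ℝ) / (k n : ℝ) with hXdef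
  -- basic eventual facts
  have ev0 : ∀ᶠ n : ℕ in atTop, 1 ≤ k n ∧ k n ≤ n := eventually_atTop.2 ⟨1, hk⟩
  have evX1 : ∀ᶠ n : ℕ in atTop, (1:ℝ) ≤ X n := by
    filter_upwards [ev0] with n hn
    have h1 : (1:ℝ) ≤ (k n : ℝ) := by exact_mod_cast hn.1
    have h2 : (k n : ℝ) ≤ (n : ℝ) := by exact_mod_cast hn.2
    exact (one_le_div (by linarith)).2 h2
  have evXtop : Tendsto X atTop atTop := by
    have h1 : Tendsto (fun n : ℕ => (k n : ℝ) / n) atTop (𝓝[>] 0) := by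
      rw [tendsto_nhdsWithin_iff]
      refine ⟨hkn0, ?_⟩
      filter_upwards [ev0] with n hn
      have h1 : (0:ℝ) < (k n : ℝ) := by exact_mod_cast hn.1
      have h2 : (0:ℝ) < (n : ℝ) := lt_of_lt_of_le h1 (by exact_mod_cast hn.2)
      exact div_pos h1 h2
    refine h1.inv_tendsto_nhdsGT_zero.congr fun n => ?_
    simp [hXdef, Pi.inv_apply, inv_div]
  have evlogX : ∀ᶠ n : ℕ in atTop, (1:ℝ) ≤ Real.log (X n) :=
    (Real.tendsto_log_atTop.comp evXtop).eventually_ge_atTop 1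
  have evlogn : ∀ᶠ n : ℕ in atTop, (1:ℝ) ≤ Real.log n :=
    (Real.tendsto_log_atTop.comp tendsto_natCast_atTop_atTop).eventually_ge_atTop 1
  have evXx₀ : ∀ᶠ n : ℕ in atTop, x₀ ≤ X n := evXtop.eventually_ge_atTop x₀
  have evlogXn : ∀ᶠ n : ℕ in atTop, Real.log (X n) ≤ Real.log n := by
    filter_upwards [ev0, evX1] with n hn h1
    apply Real.log_le_log (lt_of_lt_of_le one_pos h1)
    have hk1 : (1:ℝ) ≤ (k n : ℝ) := by exact_mod_cast hn.1
    exact div_le_self (Nat.cast_nonneg n) hk1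
  have hlamtend : Tendsto lam atTop (𝓝 0) := by
    refine (Tendsto.congr (fun n => (hlam n).symm) ?_)
    exact (tendsto_rpow_neg_atTop (by norm_num : (0:ℝ) < 1/2)).comp hkinfty
  have evlam : ∀ᶠ n : ℕ in atTop, 0 < lam n := by
    filter_upwards [ev0] with n hn
    have h1 : (0:ℝ) < (k n : ℝ) := by exact_mod_cast hn.1
    rw [hlam]; exact Real.rpow_pos_of_pos h1 _
  have evlamk : ∀ᶠ n : ℕ in atTop, (k n : ℝ) ^ ((1:ℝ)/2) * lam n = 1 := by
    filter_upwards [ev0] with n hn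
    have h1 : (0:ℝ) < (k n : ℝ) := by exact_mod_cast hn.1
    rw [hlam, ← Real.rpow_add h1]
    norm_num
  -- the quotient sequence
  set A := fun n : ℕ => (k n : ℝ) ^ (-(1 / (2 * α₂))) * (Real.log n) ^ (-(1 / α₂)) with hAdef
  set B := fun n : ℕ => (k n : ℝ) ^ (-(1 / α₁)) with hBdef
  set ρ := fun n : ℕ => δ n / min (A n) (B n) with hρdef
  have hρtend : Tendsto ρ atTop (𝓝 0) := hδsmall
  have evABρ : ∀ᶠ n : ℕ in atTop, 0 < A n ∧ 0 < B n ∧ 0 < ρ n ∧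
      δ n ≤ ρ n * A n ∧ δ n ≤ ρ n * B n := by
    filter_upwards [ev0, evlogn] with n hn hlogn
    have hk0 : (0:ℝ) < (k n : ℝ) := by exact_mod_cast hn.1
    have hlog0 : (0:ℝ) < Real.log n := lt_of_lt_of_le one_pos hlogn
    have hA0 : 0 < A n := mul_pos (Real.rpow_pos_of_pos hk0 _) (Real.rpow_pos_of_pos hlog0 _)
    have hB0 : 0 < B n := Real.rpow_pos_of_pos hk0 _
    have hmin0 : 0 < min (A n) (B n) := lt_min hA0 hB0
    have hρ0 : 0 < ρ n := div_pos (hδpos n) hmin0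
    have hδeq : δ n = ρ n * min (A n) (B n) := (div_mul_cancel₀ _ hmin0.ne').symm
    refine ⟨hA0, hB0, hρ0, ?_, ?_⟩
    · rw [hδeq]; exact mul_le_mul_of_nonneg_left (min_le_left _ _) hρ0.le
    · rw [hδeq]; exact mul_le_mul_of_nonneg_left (min_le_right _ _) hρ0.le
  have evρpow : ∀ β θ : ℝ, 0 < β → 0 < θ → ∀ᶠ n : ℕ in atTop, ρ n ^ β ≤ θ := by
    intro β θ hβ hθ
    have h1 : ∀ᶠ n : ℕ in atTop, ρ n < θ ^ β⁻¹ :=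
      hρtend.eventually (eventually_lt_nhds (Real.rpow_pos_of_pos hθ _))
    filter_upwards [h1, evABρ] with n h1 h2
    calc ρ n ^ β ≤ (θ ^ β⁻¹) ^ β := Real.rpow_le_rpow h2.2.2.1.le h1.le hβ.le
      _ = θ := Real.rpow_inv_rpow hθ.le hβ.ne'
  -- exponent computations
  have eα1 : (-(1 / (2 * α₂))) * α₂ = (-(1/2) : ℝ) := by
    field_simp
  have eα2 : (-(1 / α₂)) * α₂ = (-1 : ℝ) := by
    field_simp
  have eα3 : (-(1 / α₁)) * (α₁ / 2) = (-(1/2) : ℝ) := by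
    field_simp
  -- (a): C₂ δ^{α₂} log(X n) ≤ τ λ eventually
  have eva : ∀ τ : ℝ, 0 < τ →
      ∀ᶠ n : ℕ in atTop, C₂ * δ n ^ α₂ * Real.log (X n) ≤ τ * lam n := by
    intro τ hτ
    filter_upwards [ev0, evlogn, evABρ, evρpow α₂ (τ / C₂) hα₂ (by positivity), evX1,
      evlogXn] with n hn hlogn hABρ hρp hX1 hlXn
    obtain ⟨hA0, hB0, hρ0, hδA, hδB⟩ := hABρ
    have hk0 : (0:ℝ) < (k n : ℝ) := by exact_mod_cast hn.1
    have hlog0 : (0:ℝ) < Real.log n := lt_of_lt_of_le one_pos hlogn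
    have hAα : A n ^ α₂ = (k n : ℝ) ^ (-(1/2) : ℝ) * (Real.log n)⁻¹ := by
      rw [hAdef]
      show ((k n : ℝ) ^ (-(1 / (2 * α₂))) * (Real.log n) ^ (-(1 / α₂))) ^ α₂ = _
      rw [Real.mul_rpow (Real.rpow_nonneg hk0.le _) (Real.rpow_nonneg hlog0.le _),
        ← Real.rpow_mul hk0.le, ← Real.rpow_mul hlog0.le, eα1, eα2, Real.rpow_neg_one]
    have hδα : δ n ^ α₂ ≤ ρ n ^ α₂ * ((k n : ℝ) ^ (-(1/2) : ℝ) * (Real.log n)⁻¹) := by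
      calc δ n ^ α₂ ≤ (ρ n * A n) ^ α₂ := Real.rpow_le_rpow (hδpos n).le hδA hα₂.le
        _ = ρ n ^ α₂ * A n ^ α₂ := Real.mul_rpow hρ0.le hA0.le
        _ = _ := by rw [hAα]
    have hlogX0 : 0 ≤ Real.log (X n) := Real.log_nonneg hX1
    have hρnn : 0 ≤ ρ n ^ α₂ := Real.rpow_nonneg hρ0.le _
    have hknn : 0 ≤ (k n : ℝ) ^ (-(1/2) : ℝ) := Real.rpow_nonneg hk0.le _
    calc C₂ * δ n ^ α₂ * Real.log (X n)
        ≤ C₂ * (ρ n ^ α₂ * ((k n : ℝ) ^ (-(1/2) : ℝ) * (Real.log n)⁻¹)) * Real.log n := by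
          apply mul_le_mul (mul_le_mul_of_nonneg_left hδα hC₂.le) hlXn hlogX0
          exact mul_nonneg hC₂.le (mul_nonneg hρnn (mul_nonneg hknn (by positivity)))
      _ = C₂ * ρ n ^ α₂ * (k n : ℝ) ^ (-(1/2) : ℝ) := by
          field_simp
      _ ≤ τ * (k n : ℝ) ^ (-(1/2) : ℝ) := by
          refine mul_le_mul_of_nonneg_right ?_ hknn
          calc C₂ * ρ n ^ α₂ ≤ C₂ * (τ / C₂) := mul_le_mul_of_nonneg_left hρp hC₂.le
            _ = τ := by field_simp
      _ = τ * lam n := by rw [hlam]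
  -- (b): C δ^{α} ≤ τ λ eventually
  have evb : ∀ τ : ℝ, 0 < τ →
      ∀ᶠ n : ℕ in atTop, C * δ n ^ min (α₁ / 2) α₂ ≤ τ * lam n := by
    intro τ hτ
    rcases le_or_gt (α₁ / 2) α₂ with hcase | hcase
    · have hαeq : min (α₁ / 2) α₂ = α₁ / 2 := min_eq_left hcase
      filter_upwards [ev0, evABρ, evρpow (α₁ / 2) (τ / C) (by positivity) (by positivity)]
        with n hn hABρ hρp
      obtain ⟨hA0, hB0, hρ0, hδA, hδB⟩ := hABρ
      have hk0 : (0:ℝ) < (k n : ℝ) := by exact_mod_cast hn.1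
      have hBα : B n ^ (α₁ / 2) = (k n : ℝ) ^ (-(1/2) : ℝ) := by
        rw [hBdef]
        show ((k n : ℝ) ^ (-(1 / α₁))) ^ (α₁ / 2) = _
        rw [← Real.rpow_mul hk0.le, eα3]
      have hknn : 0 ≤ (k n : ℝ) ^ (-(1/2) : ℝ) := Real.rpow_nonneg hk0.le _
      calc C * δ n ^ min (α₁ / 2) α₂ = C * δ n ^ (α₁ / 2) := by rw [hαeq]
        _ ≤ C * (ρ n ^ (α₁ / 2) * (k n : ℝ) ^ (-(1/2) : ℝ)) := by
            refine mul_le_mul_of_nonneg_left ?_ hC.le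
            calc δ n ^ (α₁ / 2) ≤ (ρ n * B n) ^ (α₁ / 2) :=
                  Real.rpow_le_rpow (hδpos n).le hδB (by positivity)
              _ = ρ n ^ (α₁ / 2) * B n ^ (α₁ / 2) := Real.mul_rpow hρ0.le hB0.le
              _ = _ := by rw [hBα]
        _ = C * ρ n ^ (α₁ / 2) * (k n : ℝ) ^ (-(1/2) : ℝ) := by ring
        _ ≤ τ * (k n : ℝ) ^ (-(1/2) : ℝ) := by
            refine mul_le_mul_of_nonneg_right ?_ hknn
            calc C * ρ n ^ (α₁ / 2) ≤ C * (τ / C) := mul_le_mul_of_nonneg_left hρp hC.le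
              _ = τ := by field_simp
        _ = τ * lam n := by rw [hlam]
    · have hαeq : min (α₁ / 2) α₂ = α₂ := min_eq_right hcase.le
      filter_upwards [ev0, evlogn, evABρ, evρpow α₂ (τ / C) hα₂ (by positivity)]
        with n hn hlogn hABρ hρp
      obtain ⟨hA0, hB0, hρ0, hδA, hδB⟩ := hABρ
      have hk0 : (0:ℝ) < (k n : ℝ) := by exact_mod_cast hn.1
      have hlog0 : (0:ℝ) < Real.log n := lt_of_lt_of_le one_pos hlogn
      have hAα : A n ^ α₂ = (k n : ℝ) ^ (-(1/2) : ℝ) * (Real.log n)⁻¹ := by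
        rw [hAdef]
        show ((k n : ℝ) ^ (-(1 / (2 * α₂))) * (Real.log n) ^ (-(1 / α₂))) ^ α₂ = _
        rw [Real.mul_rpow (Real.rpow_nonneg hk0.le _) (Real.rpow_nonneg hlog0.le _),
          ← Real.rpow_mul hk0.le, ← Real.rpow_mul hlog0.le, eα1, eα2, Real.rpow_neg_one]
      have hknn : 0 ≤ (k n : ℝ) ^ (-(1/2) : ℝ) := Real.rpow_nonneg hk0.le _
      have hρnn : 0 ≤ ρ n ^ α₂ := Real.rpow_nonneg hρ0.le _
      have hinv1 : (Real.log n)⁻¹ ≤ 1 := by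
        rw [inv_eq_one_div]
        exact div_le_one_of_le₀ hlogn hlog0.le
      calc C * δ n ^ min (α₁ / 2) α₂ = C * δ n ^ α₂ := by rw [hαeq]
        _ ≤ C * (ρ n ^ α₂ * ((k n : ℝ) ^ (-(1/2) : ℝ) * (Real.log n)⁻¹)) := by
            refine mul_le_mul_of_nonneg_left ?_ hC.le
            calc δ n ^ α₂ ≤ (ρ n * A n) ^ α₂ := Real.rpow_le_rpow (hδpos n).le hδA hα₂.le
              _ = ρ n ^ α₂ * A n ^ α₂ := Real.mul_rpow hρ0.le hA0.le
              _ = _ := by rw [hAα]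
        _ ≤ C * (ρ n ^ α₂ * ((k n : ℝ) ^ (-(1/2) : ℝ) * 1)) := by
            refine mul_le_mul_of_nonneg_left (mul_le_mul_of_nonneg_left
              (mul_le_mul_of_nonneg_left hinv1 hknn) hρnn) hC.le
        _ = C * ρ n ^ α₂ * (k n : ℝ) ^ (-(1/2) : ℝ) := by ring
        _ ≤ τ * (k n : ℝ) ^ (-(1/2) : ℝ) := by
            refine mul_le_mul_of_nonneg_right ?_ hknn
            calc C * ρ n ^ α₂ ≤ C * (τ / C) := mul_le_mul_of_nonneg_left hρp hC.le
              _ = τ := by field_simp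
        _ = τ * lam n := by rw [hlam]
  -- (c): X^{-κ} ≤ τ λ eventually
  have hGtend : Tendsto (fun n : ℕ => (k n : ℝ) ^ ((1:ℝ)/2) * X n ^ (-κ)) atTop (𝓝 0) := by
    have h1 : Tendsto (fun n : ℕ => ((k n : ℝ) / (n : ℝ) ^ (1 - ε)) ^ ((1:ℝ)/2 + κ))
        atTop (𝓝 0) := by
      have hc := (Real.continuousAt_rpow_const 0 ((1:ℝ)/2 + κ) (Or.inr (by positivity))).tendsto
      have h2 := hc.comp hksmall
      rw [Real.zero_rpow (show ((1:ℝ)/2 + κ) ≠ 0 by positivity)] at h2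
      exact h2
    have h2 : Tendsto (fun n : ℕ => (n : ℝ) ^ (-(ε/2))) atTop (𝓝 0) :=
      (tendsto_rpow_neg_atTop (by positivity)).comp tendsto_natCast_atTop_atTop
    have h3 := h1.mul h2
    rw [mul_zero] at h3
    refine Tendsto.congr' ?_ h3
    filter_upwards [ev0] with n hn
    have hk0 : (0:ℝ) < (k n : ℝ) := by exact_mod_cast hn.1
    have hn0 : (0:ℝ) < (n : ℝ) := by
      have : 1 ≤ n := hn.1.trans hn.2
      exact_mod_cast this
    have hXpos : 0 < X n := div_pos hn0 hk0
    have hNε : (0:ℝ) < (n : ℝ) ^ (1 - ε) := Real.rpow_pos_of_pos hn0 _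
    have hq : (0:ℝ) < (k n : ℝ) / (n : ℝ) ^ (1 - ε) := div_pos hk0 hNε
    rw [Real.rpow_def_of_pos hq, Real.rpow_def_of_pos hn0 (-(ε/2)),
      Real.rpow_def_of_pos hk0 ((1:ℝ)/2), Real.rpow_def_of_pos hXpos (-κ),
      ← Real.exp_add, ← Real.exp_add]
    congr 1
    rw [Real.log_div hk0.ne' hNε.ne', Real.log_rpow hn0,
      show X n = (n : ℝ) / (k n : ℝ) from rfl, Real.log_div hn0.ne' hk0.ne', hκdef]
    field_simp
    ring
  have evc : ∀ τ : ℝ, 0 < τ → ∀ᶠ n : ℕ in atTop, X n ^ (-κ) ≤ τ * lam n := by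
    intro τ hτ
    filter_upwards [hGtend.eventually (eventually_le_nhds hτ), ev0, evlam, evlamk]
      with n h1 hn hl hlk
    have hk0 : (0:ℝ) < (k n : ℝ) := by exact_mod_cast hn.1
    have hXn : X n ^ (-κ) = lam n * ((k n : ℝ) ^ ((1:ℝ)/2) * X n ^ (-κ)) := by
      rw [← mul_assoc, mul_comm (lam n), hlk, one_mul]
    rw [hXn]
    calc lam n * ((k n : ℝ) ^ ((1:ℝ)/2) * X n ^ (-κ)) ≤ lam n * τ :=
        mul_le_mul_of_nonneg_left h1 hl.le
      _ = τ * lam n := mul_comm _ _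
  -- τ λ ≤ 1 eventually
  have evτ1 : ∀ τ : ℝ, 0 < τ → ∀ᶠ n : ℕ in atTop, τ * lam n ≤ 1 := by
    intro τ hτ
    have h1 : Tendsto (fun n => τ * lam n) atTop (𝓝 0) := by
      simpa using hlamtend.const_mul τ
    exact h1.eventually (eventually_le_nhds one_pos)
  -- the combined key statement
  have key : ∀ η : ℝ, 0 < η → ∀ᶠ n : ℕ in atTop, ∀ s ∈ Icc (0:ℝ) 1, ∀ u ∈ Icc (0:ℝ) 1,
      |s - u| ≤ δ n →
      |γ s - γ u| ≤ η * lam n ∧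
      |a s (X n) / a u (X n) - 1| ≤ η * lam n ∧
      |(U s (X n) - U u (X n)) / a u (X n)| ≤ η * lam n := by
    intro η hη
    set τ := η / K with hτdef
    have hτ : 0 < τ := div_pos hη hK0
    have hτK : τ * K = η := div_mul_cancel₀ η hK0.ne'
    have hτη : τ ≤ η := by
      rw [hτdef]
      exact div_le_self hη.le hK1
    filter_upwards [eva τ hτ, evb τ hτ, evc τ hτ, evτ1 τ hτ, evX1, evlogX, evXx₀, evlam]
      with n ha' hb' hc' hτ1 hX1 hlogX1 hXx₀ hlam0
    intro s hs u hu hsu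
    have hxpos : 0 < X n := lt_of_lt_of_le one_pos hX1
    set L := τ * lam n with hLdef
    have hL0 : 0 ≤ L := mul_nonneg hτ.le hlam0.le
    have hL1 : L ≤ 1 := hτ1
    -- distance bounds
    have hsuδ2 : |s - u| ^ α₂ ≤ δ n ^ α₂ := Real.rpow_le_rpow (abs_nonneg _) hsu hα₂.le
    have hd : |γ s - γ u| ≤ C₂ * δ n ^ α₂ :=
      (hγhold s hs u hu).trans (mul_le_mul_of_nonneg_left hsuδ2 hC₂.le)
    have hd1 : |γ s - γ u| * Real.log (X n) ≤ L := by
      calc |γ s - γ u| * Real.log (X n) ≤ C₂ * δ n ^ α₂ * Real.log (X n) :=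
          mul_le_mul_of_nonneg_right hd (by linarith)
        _ ≤ L := ha'
    have hd2 : |γ s - γ u| ≤ L := by
      have h1 : |γ s - γ u| ≤ |γ s - γ u| * Real.log (X n) :=
        le_mul_of_one_le_right (abs_nonneg _) hlogX1
      linarith
    have hdc : |c s - c u| ≤ L := by
      calc |c s - c u| ≤ C * |s - u| ^ min (α₁ / 2) α₂ := hchold s hs u hu
        _ ≤ C * δ n ^ min (α₁ / 2) α₂ := mul_le_mul_of_nonneg_left
            (Real.rpow_le_rpow (abs_nonneg _) hsu hα.le) hC.le
        _ ≤ L := hb'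
    -- local values
    have hγu := hmγ u hu
    have hcu := hmc u hu
    have hcsM := hMcB s hs
    have hγu0 : 0 < γ u := lt_of_lt_of_le hmγ0 hγu
    have hcu0 : 0 < c u := lt_of_lt_of_le hmc0 hcu
    have hγs0 : 0 < γ s := hγpos s hs
    have hcs0 : 0 < c s := hcpos s hs
    have hxγu1 : (1:ℝ) ≤ X n ^ γ u := Real.one_le_rpow hX1 hγu0.le
    have hxγu0 : 0 < X n ^ γ u := Real.rpow_pos_of_pos hxpos _
    set Rr := X n ^ (γ s - γ u) with hRrdef
    have hRrpos : 0 < Rr := Real.rpow_pos_of_pos hxpos _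
    have hyL : |Real.log (X n) * (γ s - γ u)| ≤ L := by
      rw [abs_mul, abs_of_nonneg (Real.log_nonneg hX1)]
      calc Real.log (X n) * |γ s - γ u| = |γ s - γ u| * Real.log (X n) := mul_comm _ _
        _ ≤ L := hd1
    have hRr1 : |Rr - 1| ≤ 2 * L := by
      rw [hRrdef, Real.rpow_def_of_pos hxpos]
      calc |Real.exp (Real.log (X n) * (γ s - γ u)) - 1|
          ≤ 2 * |Real.log (X n) * (γ s - γ u)| :=
            Real.abs_exp_sub_one_le (hyL.trans hL1)
        _ ≤ 2 * L := by linarith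
    have hRr3 : Rr ≤ 3 := by
      have := abs_le.1 hRr1
      linarith
    set Q := c s / c u with hQdef
    set P := γ s / γ u with hPdef
    have hQ0 : 0 < Q := div_pos hcs0 hcu0
    have hQ1 : |Q - 1| ≤ L / mc := by
      rw [hQdef, div_sub_one hcu0.ne', abs_div, abs_of_pos hcu0]
      exact div_le_div₀ hL0 hdc hmc0 hcu
    have hQle : Q ≤ Mc / mc := div_le_div₀ hMc0.le hcsM hmc0 hcu
    have hP1 : |P - 1| ≤ L / mγ := by
      rw [hPdef, div_sub_one hγu0.ne', abs_div, abs_of_pos hγu0]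
      exact div_le_div₀ hL0 hd2 hmγ0 hγu
    have hLK : L * K = η * lam n := by
      rw [hLdef]
      calc τ * lam n * K = τ * K * lam n := by ring
        _ = η * lam n := by rw [hτK]
    -- (2.11)
    refine ⟨hd2.trans ?_, ?_, ?_⟩
    · exact mul_le_mul_of_nonneg_right hτη hlam0.le
    -- (2.12)
    · have hxs : X n ^ γ s = X n ^ γ u * Rr := by
        rw [hRrdef, Real.rpow_sub hxpos]
        field_simp
      have ratio : a s (X n) / a u (X n) = P * Q * Rr := by
        rw [ha, ha, hxs, hPdef, hQdef]
        field_simp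
      rw [ratio]
      have decomp : P * Q * Rr - 1 = (P - 1) * (Q * Rr) + ((Q - 1) * Rr + (Rr - 1)) := by
        ring
      have e1 : |(P - 1) * (Q * Rr)| = |P - 1| * (Q * Rr) := by
        rw [abs_mul, abs_of_pos (mul_pos hQ0 hRrpos)]
      have e2 : |(Q - 1) * Rr| = |Q - 1| * Rr := by
        rw [abs_mul, abs_of_pos hRrpos]
      have hQRle : Q * Rr ≤ (Mc / mc) * 3 :=
        mul_le_mul hQle hRr3 hRrpos.le (by positivity)
      calc |P * Q * Rr - 1| = |(P - 1) * (Q * Rr) + ((Q - 1) * Rr + (Rr - 1))| := by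
            rw [decomp]
        _ ≤ |(P - 1) * (Q * Rr)| + |(Q - 1) * Rr + (Rr - 1)| := abs_add_le _ _
        _ ≤ |P - 1| * (Q * Rr) + (|Q - 1| * Rr + |Rr - 1|) := by
            rw [e1]
            have := (abs_add_le ((Q - 1) * Rr) (Rr - 1)).trans (by rw [e2])
            linarith
        _ ≤ (L / mγ) * ((Mc / mc) * 3) + ((L / mc) * Rr + 2 * L) := by
            refine add_le_add (mul_le_mul hP1 hQRle (mul_pos hQ0 hRrpos).le (by positivity))
              (add_le_add (mul_le_mul_of_nonneg_right hQ1 hRrpos.le) hRr1)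
        _ ≤ (L / mγ) * ((Mc / mc) * 3) + ((L / mc) * 3 + 2 * L) := by
            have : (L / mc) * Rr ≤ (L / mc) * 3 :=
              mul_le_mul_of_nonneg_left hRr3 (by positivity)
            linarith
        _ = L * K₁ := by
            rw [hK₁def]
            field_simp
            ring
        _ ≤ L * K := mul_le_mul_of_nonneg_left hKK₁ hL0
        _ = η * lam n := hLK
    -- (2.13)
    · have hxs : X n ^ γ s = X n ^ γ u * Rr := by
        rw [hRrdef, Real.rpow_sub hxpos]
        field_simp
      have hUs := hx₀ (X n) hXx₀ s hs
      have hUu := hx₀ (X n) hXx₀ u hu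
      have herr : X n ^ (-κ) ≤ L := hc'
      have herr0 : 0 ≤ X n ^ (-κ) := Real.rpow_nonneg hxpos.le _
      have hcsx : c s * X n ^ γ s - c u * X n ^ γ u = (c u * X n ^ γ u) * (Q * Rr - 1) := by
        rw [hxs, hQdef]
        field_simp
      have hQR : |Q * Rr - 1| ≤ (L / mc) * 3 + 2 * L := by
        have decomp : Q * Rr - 1 = (Q - 1) * Rr + (Rr - 1) := by ring
        have e2 : |(Q - 1) * Rr| = |Q - 1| * Rr := by
          rw [abs_mul, abs_of_pos hRrpos]
        calc |Q * Rr - 1| = |(Q - 1) * Rr + (Rr - 1)| := by rw [decomp]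
          _ ≤ |(Q - 1) * Rr| + |Rr - 1| := abs_add_le _ _
          _ = |Q - 1| * Rr + |Rr - 1| := by rw [e2]
          _ ≤ (L / mc) * Rr + 2 * L :=
              add_le_add (mul_le_mul_of_nonneg_right hQ1 hRrpos.le) hRr1
          _ ≤ (L / mc) * 3 + 2 * L := by
              have : (L / mc) * Rr ≤ (L / mc) * 3 :=
                mul_le_mul_of_nonneg_left hRr3 (by positivity)
              linarith
      have hnum : |U s (X n) - U u (X n)| ≤
          (c u * X n ^ γ u) * ((L / mc) * 3 + 2 * L) + 2 * X n ^ (-κ) := by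
        have e : U s (X n) - U u (X n) =
            ((U s (X n) - c s * X n ^ γ s) - (U u (X n) - c u * X n ^ γ u)) +
            (c s * X n ^ γ s - c u * X n ^ γ u) := by ring
        have h12 : |(U s (X n) - c s * X n ^ γ s) - (U u (X n) - c u * X n ^ γ u)| ≤
            X n ^ (-κ) + X n ^ (-κ) := (abs_sub _ _).trans (add_le_add hUs hUu)
        have h3 : |c s * X n ^ γ s - c u * X n ^ γ u| =
            (c u * X n ^ γ u) * |Q * Rr - 1| := by
          rw [hcsx, abs_mul, abs_of_pos (mul_pos hcu0 hxγu0)]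
        have h3' : |c s * X n ^ γ s - c u * X n ^ γ u| ≤
            (c u * X n ^ γ u) * ((L / mc) * 3 + 2 * L) := by
          rw [h3]
          exact mul_le_mul_of_nonneg_left hQR (mul_pos hcu0 hxγu0).le
        calc |U s (X n) - U u (X n)|
            = |((U s (X n) - c s * X n ^ γ s) - (U u (X n) - c u * X n ^ γ u)) +
              (c s * X n ^ γ s - c u * X n ^ γ u)| := by rw [← e]
          _ ≤ |(U s (X n) - c s * X n ^ γ s) - (U u (X n) - c u * X n ^ γ u)| +
              |c s * X n ^ γ s - c u * X n ^ γ u| := abs_add_le _ _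
          _ ≤ (X n ^ (-κ) + X n ^ (-κ)) +
              (c u * X n ^ γ u) * ((L / mc) * 3 + 2 * L) := add_le_add h12 h3'
          _ = (c u * X n ^ γ u) * ((L / mc) * 3 + 2 * L) + 2 * X n ^ (-κ) := by ring
      have hD : 0 < a u (X n) := by
        rw [ha]
        exact mul_pos (mul_pos hγu0 hcu0) hxγu0
      rw [abs_div, abs_of_pos hD]
      have hZ0 : 0 ≤ (L / mc) * 3 + 2 * L := by
        have : 0 ≤ L / mc := by positivity
        linarith
      have hstep1 : |U s (X n) - U u (X n)| / a u (X n) ≤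
          ((c u * X n ^ γ u) * ((L / mc) * 3 + 2 * L) + 2 * X n ^ (-κ)) / a u (X n) := by
        apply div_le_div₀ ?_ hnum hD le_rfl
        have h0 : 0 ≤ (c u * X n ^ γ u) * ((L / mc) * 3 + 2 * L) :=
          mul_nonneg (mul_pos hcu0 hxγu0).le hZ0
        linarith
      have hsplit : ((c u * X n ^ γ u) * ((L / mc) * 3 + 2 * L) + 2 * X n ^ (-κ)) / a u (X n) =
          (c u * X n ^ γ u) * ((L / mc) * 3 + 2 * L) / a u (X n) +
          2 * X n ^ (-κ) / a u (X n) := add_div _ _ _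
      have hterm1 : (c u * X n ^ γ u) * ((L / mc) * 3 + 2 * L) / a u (X n) ≤
          ((L / mc) * 3 + 2 * L) / mγ := by
        have e : (c u * X n ^ γ u) * ((L / mc) * 3 + 2 * L) / a u (X n) =
            ((L / mc) * 3 + 2 * L) / γ u := by
          rw [ha]
          field_simp
        rw [e]
        exact div_le_div_of_nonneg_left hZ0 hmγ0 hγu
      have hterm2 : 2 * X n ^ (-κ) / a u (X n) ≤ 2 * L / (mγ * mc) := by
        rw [ha]
        refine div_le_div₀ (by linarith) (by linarith) (by positivity) ?_
        calc mγ * mc ≤ γ u * c u :=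
            mul_le_mul hγu hcu hmc0.le (le_trans hmγ0.le hγu)
          _ ≤ γ u * c u * X n ^ γ u :=
            le_mul_of_one_le_right (mul_pos hγu0 hcu0).le hxγu1
      calc |U s (X n) - U u (X n)| / a u (X n)
          ≤ ((c u * X n ^ γ u) * ((L / mc) * 3 + 2 * L) + 2 * X n ^ (-κ)) / a u (X n) :=
            hstep1
        _ = (c u * X n ^ γ u) * ((L / mc) * 3 + 2 * L) / a u (X n) +
            2 * X n ^ (-κ) / a u (X n) := hsplit
        _ ≤ ((L / mc) * 3 + 2 * L) / mγ + 2 * L / (mγ * mc) := add_le_add hterm1 hterm2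
        _ = L * K₂ := by
            rw [hK₂def]
            field_simp
        _ ≤ L * K := mul_le_mul_of_nonneg_left hKK₂ hL0
        _ = η * lam n := hLK
  refine ⟨fun η hη => (key η hη).mono ?_, fun η hη => (key η hη).mono ?_,
    fun η hη => (key η hη).mono ?_⟩
  · intro n h s hs u hu hsu
    exact (h s hs u hu hsu).1
  · intro n h s hs u hu hsu
    exact (h s hs u hu hsu).2.1
  · intro n h s hs u hu hsu
    exact (h s hs u hu hsu).2.2
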